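/- Let K be a field of characteristic zero, let ℓ ≥ 2, and suppose λ_{i,j} = f_j(i) where each f_j is a polynomial of degree at most ℓ in i with coefficients in K, written f_j(i) = a_{j,1}·i^ℓ + ... + a_{j,ℓ}·i + a_{j,ℓ+1}, with a_{1,1} ≠ 0. If the pre-Lie relations PL(i,1,k): f_1(i)·f_k(i+1) − f_k(1)·f_{k+1}(i) = f_k(i)·f_1(i+k) − f_1(k)·f_{k+1}(i) hold for all positive integers i and all k ≥ 2, then f_j = 0 for all j ≥ 2; that is, the only strong ℓth order family is that of scaled corollas λ_{i,1} = f_1(i), λ_{i,j} = 0 for j ≥ 2. -/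

import Mathlib

open Polynomial

private lemma hasse_eval {K : Type*} [Field K] [CharZero K]
    (p : Polynomial K) (e : ℕ) (hd : p.natDegree ≤ e + 1) (r : K) :
    (Polynomial.hasseDeriv e p).eval r
      = p.coeff e + (e + 1 : K) * p.coeff (e + 1) * r := by
  have h : Polynomial.hasseDeriv e p
      = C (p.coeff e) + C ((e + 1 : K) * p.coeff (e + 1)) * X := by
    ext n
    rw [hasseDeriv_coeff]
    match n with
    | 0 => simp
    | 1 =>
      rw [coeff_add, coeff_C_mul, coeff_X_one, coeff_C, if_neg one_ne_zero,
        add_comm 1 e, Nat.choose_succ_self_right, add_comm e 1]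
      push_cast; ring
    | (m+2) =>
      have h1 : p.coeff (m + 2 + e) = 0 :=
        coeff_eq_zero_of_natDegree_lt (by omega)
      rw [coeff_add, coeff_C_mul, coeff_X, coeff_C]
      simp [h1]
  rw [h]; simp

private lemma delta_coeff {K : Type*} [Field K] [CharZero K]
    (p : Polynomial K) (e : ℕ) (hd : p.natDegree ≤ e + 1) (r : K) :
    (p.comp (X + C r) - p).coeff e = (e + 1 : K) * p.coeff (e + 1) * r := by
  rw [← taylor_apply, coeff_sub, taylor_coeff, hasse_eval p e hd r]; ring

private lemma delta_natDegree {K : Type*} [Field K] [CharZero K]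
    (p : Polynomial K) (e : ℕ) (hd : p.natDegree ≤ e + 1) (r : K) :
    (p.comp (X + C r) - p).natDegree ≤ e := by
  rw [← taylor_apply]
  refine natDegree_le_iff_coeff_eq_zero.mpr fun m hm => ?_
  rw [coeff_sub, taylor_coeff, hasse_eval p m (le_trans hd (by omega)) r]
  have h1 : p.coeff (m + 1) = 0 := coeff_eq_zero_of_natDegree_lt (by omega)
  rw [h1]; ring

/-- Classification of strong ℓth order sequences, ℓ ≥ 2: if `λ_{i,j} = f_j(i)` where the
`f_j` are polynomials of degree at most ℓ, the leading coefficient of `f_1` is nonzero,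
and the pre-Lie relations `PL(i,1,k)` hold for all `i ≥ 1` and `k ≥ 2`, then `f_j = 0`
for all `j ≥ 2` (scaled corollas). -/
theorem strong_higher_order_classification (K : Type*) [Field K] [CharZero K]
    (ℓ : ℕ) (hℓ : 2 ≤ ℓ)
    (f : ℕ → Polynomial K)
    (hdeg : ∀ j : ℕ, 1 ≤ j → (f j).natDegree ≤ ℓ)
    (hlead : (f 1).coeff ℓ ≠ 0)
    (hPL : ∀ i k : ℕ, 1 ≤ i → 2 ≤ k →
      (f 1).eval (i : K) * (f k).eval ((i : K) + 1)
          - (f k).eval 1 * (f (k + 1)).eval (i : K)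
        = (f k).eval (i : K) * (f 1).eval ((i : K) + (k : K))
          - (f 1).eval (k : K) * (f (k + 1)).eval (i : K)) :
    ∀ j : ℕ, 2 ≤ j → f j = 0 := by
  have key : ∀ k : ℕ, 2 ≤ k →
      f 1 * ((f k).comp (X + C 1) - f k)
        - f k * ((f 1).comp (X + C (k : K)) - f 1)
        = C ((f k).eval 1 - (f 1).eval (k : K)) * f (k + 1) := by
    intro k hk
    rw [← sub_eq_zero]
    apply eq_zero_of_infinite_isRoot
    apply Set.Infinite.mono (s := Set.range fun n : ℕ => ((n + 1 : ℕ) : K))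
    · rintro x ⟨n, rfl⟩
      have h := hPL (n + 1) k (by omega) hk
      push_cast at h
      simp only [Set.mem_setOf_eq, IsRoot, eval_sub, eval_mul, eval_comp, eval_add,
        eval_X, eval_C]
      push_cast
      linear_combination h
    · exact Set.infinite_range_of_injective fun a b hab => by
        exact_mod_cast Nat.succ_injective (Nat.cast_injective hab)
  have step : ∀ k : ℕ, 2 ≤ k → f k ≠ 0 →
      f (k + 1) ≠ 0 ∧ (f k).natDegree + 1 ≤ (f (k + 1)).natDegree := by
    intro k hk hfk
    obtain ⟨d, hD⟩ : ∃ d, (f k).natDegree = d := ⟨_, rfl⟩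
    have hb : (f k).coeff d ≠ 0 := by
      rw [← hD]; exact mt leadingCoeff_eq_zero.mp hfk
    have hdk : d ≤ ℓ := hD ▸ hdeg k (by omega)
    have hd1 : (f 1).natDegree ≤ ℓ := hdeg 1 le_rfl
    obtain ⟨L, rfl⟩ : ∃ L, ℓ = L + 1 := ⟨ℓ - 1, by omega⟩
    have hco : (f 1 * ((f k).comp (X + C 1) - f k)
        - f k * ((f 1).comp (X + C (k : K)) - f 1)).coeff (L + 1 + d - 1)
        = (f 1).coeff (L + 1) * (f k).coeff d * ((d : K) - ((L + 1 : ℕ) : K) * (k : K)) := by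
      rw [coeff_sub]
      rcases d with _ | e
      · -- d = 0 : f k is a nonzero constant
        have hC : f k = C ((f k).coeff 0) := eq_C_of_natDegree_eq_zero hD
        have hΔ : (f k).comp (X + C (1 : K)) - f k = 0 := by
          rw [hC]; simp
        rw [hΔ, mul_zero, coeff_zero]
        have e1 : L + 1 + 0 - 1 = 0 + L := by omega
        rw [e1, coeff_mul_add_eq_of_natDegree_le (le_of_eq hD)
          (delta_natDegree (f 1) L hd1 (k : K)),
          delta_coeff (f 1) L hd1 (k : K)]
        push_cast
        ring
      · have hfk' : (f k).natDegree ≤ e + 1 := le_of_eq hD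
        have t1 : (f 1 * ((f k).comp (X + C 1) - f k)).coeff (L + 1 + e)
            = (f 1).coeff (L + 1) * ((e + 1 : K) * (f k).coeff (e + 1) * 1) := by
          rw [coeff_mul_add_eq_of_natDegree_le hd1 (delta_natDegree (f k) e hfk' 1),
            delta_coeff (f k) e hfk' 1]
        have t2 : (f k * ((f 1).comp (X + C (k : K)) - f 1)).coeff (e + 1 + L)
            = (f k).coeff (e + 1) * ((L + 1 : K) * (f 1).coeff (L + 1) * (k : K)) := by
          rw [coeff_mul_add_eq_of_natDegree_le hfk' (delta_natDegree (f 1) L hd1 (k : K)),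
            delta_coeff (f 1) L hd1 (k : K)]
        have e1 : L + 1 + (e + 1) - 1 = L + 1 + e := by omega
        have e2 : L + 1 + e = e + 1 + L := by omega
        rw [e1, t1, e2, t2]
        push_cast
        ring
    have hnz : (f 1).coeff (L + 1) * (f k).coeff d
        * ((d : K) - ((L + 1 : ℕ) : K) * (k : K)) ≠ 0 := by
      refine mul_ne_zero (mul_ne_zero hlead hb) ?_
      rw [sub_ne_zero]
      intro hcast
      have h1 : (d : K) = (((L + 1) * k : ℕ) : K) := by push_cast at hcast ⊢; linear_combination hcast
      have h2 : d = (L + 1) * k := Nat.cast_injective h1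
      nlinarith
    have hc2 : ((f k).eval 1 - (f 1).eval (k : K))
        * (f (k + 1)).coeff (L + 1 + d - 1) ≠ 0 := by
      rw [← coeff_C_mul, ← key k hk, hco]; exact hnz
    have hcoeff : (f (k + 1)).coeff (L + 1 + d - 1) ≠ 0 :=
      fun h => hc2 (by rw [h, mul_zero])
    refine ⟨fun h => hcoeff (by rw [h, coeff_zero]), ?_⟩
    have hle := le_natDegree_of_ne_zero hcoeff
    omega
  intro j hj
  by_contra hne0
  have grow : ∀ n : ℕ, f (j + n) ≠ 0 ∧ n ≤ (f (j + n)).natDegree := by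
    intro n
    induction n with
    | zero => exact ⟨hne0, Nat.zero_le _⟩
    | succ n ih =>
      obtain ⟨h1, h2⟩ := step (j + n) (by omega) ih.1
      refine ⟨h1, ?_⟩
      calc n + 1 ≤ (f (j + n)).natDegree + 1 := by omega
        _ ≤ (f (j + n + 1)).natDegree := h2
  have h1 := (grow (ℓ + 1)).2
  have h2 := hdeg (j + (ℓ + 1)) (by omega)
  exact absurd (le_trans h1 h2) (by omega)
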